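/- (Dominance for k-smooth graph functions.) If f is k-smooth and nonzero at every vertex, then for all vertices i, j with w_ij = 1, the Laplacian-walk proposal satisfies Q'_{ij} ≥ (1/k) p_f(j). -/
import Mathlib


/-- The local cumulative coherence of order `k` at node `i`: the Euclidean norm
`‖U_kᵀ δ_i‖₂`, where `δ_i` is the `i`-th standard basis vector of `ℝ^n`. -/
noncomputable def localCoherence {n k : ℕ} (Uk : Matrix (Fin n) (Fin k) ℝ)
    (i : Fin n) : ℝ :=
  Real.sqrt (∑ l, (Uk.transpose.mulVec (Pi.single i 1) l) ^ 2)

/-- Dominance for `k`-smooth graph functions: if `f` is `k`-smooth and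
nonzero at every vertex, then for all vertices `i, j` with `w i j = 1`, the
Laplacian-walk proposal `Q'_{ij} = w_ij ‖U_kᵀ δ_j‖₂² / Σ_{l : w_il = 1} ‖U_kᵀ δ_l‖₂²`
satisfies `Q'_{ij} ≥ (1/k) p_f(j)`.  (Since `W` is a 0/1 matrix, the sum over
`{l : w_il = 1}` is encoded as `∑ l, W i l * ‖U_kᵀ δ_l‖₂²`.) -/
theorem laplacian_walk_dominance_ksmooth
    {n : ℕ} (hn : 2 ≤ n)
    (W : Matrix (Fin n) (Fin n) ℝ)
    (hWsymm : ∀ i j, W i j = W j i)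
    (hW01 : ∀ i j, W i j = 0 ∨ W i j = 1)
    (hWdiag : ∀ i, W i i = 0)
    (hWconn : ∀ i j : Fin n, ∃ m : ℕ, ∃ v : Fin (m + 1) → Fin n,
      v 0 = i ∧ v (Fin.last m) = j ∧ ∀ l : Fin m, W (v l.castSucc) (v l.succ) = 1)
    (hdegpos : ∀ i, 0 < ∑ j, W i j)
    {k : ℕ} (hk1 : 1 ≤ k) (hkn : k ≤ n)
    (Uk : Matrix (Fin n) (Fin k) ℝ)
    (hU : Uk.transpose * Uk = 1)
    (f : Fin n → ℝ) (α : Fin k → ℝ) (hf : f = Uk.mulVec α) (hfne : ∀ i, f i ≠ 0)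
    (pf : Fin n → ℝ) (hpf : ∀ i, pf i = f i ^ 2 / ∑ j, f j ^ 2)
    (Q' : Matrix (Fin n) (Fin n) ℝ)
    (hQ' : ∀ i j, Q' i j =
      W i j * (localCoherence Uk j) ^ 2 / ∑ l, W i l * (localCoherence Uk l) ^ 2)
    (i j : Fin n) (hij : W i j = 1) :
    (1 / (k : ℝ)) * pf j ≤ Q' i j := by
  set c : Fin n → ℝ := fun l => ∑ m, Uk l m ^ 2 with hc
  have hcnn : ∀ l, 0 ≤ c l := fun l => Finset.sum_nonneg fun m _ => sq_nonneg _
  have hcoh : ∀ l, (localCoherence Uk l) ^ 2 = c l := by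
    intro l
    unfold localCoherence
    rw [Real.sq_sqrt (Finset.sum_nonneg fun m _ => sq_nonneg _)]
    refine Finset.sum_congr rfl fun m _ => ?_
    simp [Matrix.mulVec, dotProduct, Pi.single_apply, mul_ite,
      Finset.sum_ite_eq', Matrix.transpose_apply]
  have hUcol : ∀ m : Fin k, ∑ l, Uk l m ^ 2 = 1 := by
    intro m
    have := congrFun (congrFun hU m) m
    simpa [Matrix.mul_apply, Matrix.transpose_apply, Matrix.one_apply, sq] using this
  have hsum_c : ∑ l, c l = (k : ℝ) := by
    rw [hc, Finset.sum_comm]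
    simp [hUcol]
  -- norm of f equals norm of α
  have hnorm : ∑ l, f l ^ 2 = ∑ m, α m ^ 2 := by
    have h1 : ∑ l, f l ^ 2 = dotProduct f f := by
      simp [dotProduct, sq]
    have h2 : dotProduct f f = dotProduct α α := by
      rw [hf, Matrix.dotProduct_mulVec, Matrix.vecMul_mulVec, hU, Matrix.vecMul_one]
    rw [h1, h2]
    simp [dotProduct, sq]
  have hSpos : 0 < ∑ l, f l ^ 2 := by
    have : 0 < f j ^ 2 := pow_pos (abs_pos.mpr (hfne j)) 2 |>.trans_eq (sq_abs _)
    exact lt_of_lt_of_le this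
      (Finset.single_le_sum (fun l _ => sq_nonneg (f l)) (Finset.mem_univ j))
  -- Cauchy–Schwarz: f j ^ 2 ≤ c j * ∑ α²
  have hCS : f j ^ 2 ≤ c j * ∑ m, α m ^ 2 := by
    have hfj : f j = ∑ m, Uk j m * α m := by
      rw [hf]; rfl
    rw [hfj]
    exact Finset.sum_mul_sq_le_sq_mul_sq Finset.univ _ _
  have hpfle : pf j ≤ c j := by
    rw [hpf j, div_le_iff₀ hSpos, hnorm]
    exact hCS
  have hcjpos : 0 < c j := by
    rcases lt_or_eq_of_le (hcnn j) with h | h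
    · exact h
    · exfalso
      have hz : ∀ m, Uk j m = 0 := by
        intro m
        have h0 : ∑ m, Uk j m ^ 2 = 0 := h.symm
        have := (Finset.sum_eq_zero_iff_of_nonneg (fun m _ => sq_nonneg (Uk j m))).mp h0
          m (Finset.mem_univ m)
        exact pow_eq_zero_iff (two_ne_zero) |>.mp this
      apply hfne j
      rw [hf]
      simp [Matrix.mulVec, dotProduct, hz]
  set D : ℝ := ∑ l, W i l * c l with hD
  have hDge : c j ≤ D := by
    have : W i j * c j ≤ D := by
      apply Finset.single_le_sum (f := fun l => W i l * c l) _ (Finset.mem_univ j)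
      intro l _
      rcases hW01 i l with h | h <;> simp [h, hcnn l]
    rwa [hij, one_mul] at this
  have hDpos : 0 < D := lt_of_lt_of_le hcjpos hDge
  have hDle : D ≤ (k : ℝ) := by
    rw [← hsum_c, hD]
    apply Finset.sum_le_sum
    intro l _
    rcases hW01 i l with h | h <;> simp [h, hcnn l]
  have hkpos : (0 : ℝ) < k := by exact_mod_cast hk1
  have hQval : Q' i j = c j / D := by
    rw [hQ' i j, hij, one_mul, hcoh]
    congr 1
    exact Finset.sum_congr rfl fun l _ => by rw [hcoh]
  rw [hQval]
  calc (1 / (k : ℝ)) * pf j ≤ (1 / (k : ℝ)) * c j := by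
        apply mul_le_mul_of_nonneg_left hpfle
        positivity
    _ = c j / (k : ℝ) := by ring
    _ ≤ c j / D := div_le_div_of_nonneg_left (le_of_lt hcjpos) hDpos hDle
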